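/- (Zeeman) Let f : [0,1] → ℝ⁴ be continuous when ℝ⁴ carries the Fine topology F, and suppose f is strictly order-preserving for the chronological order (s < t implies f(s) ≪ f(t)). Then the image f([0,1]) is a piecewise linear path consisting of a finite number of intervals along time axes: there exist 0 = t₀ < t₁ < ... < tₙ = 1 such that for each i, the image f([tᵢ, tᵢ₊₁]) is contained in an affine line {a + s·v : s ∈ ℝ} with Q(v) > 0. -/

import Mathlib

open Topology Set

/-- Minkowski space: `ℝ⁴` with the Euclidean metric structure. -/
abbrev M : Type := EuclideanSpace ℝ (Fin 4)

/-- The characteristic quadratic form `Q(x) = x₀² − x₁² − x₂² − x₃²`. -/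
noncomputable def Q (x : M) : ℝ := x 0 ^ 2 - x 1 ^ 2 - x 2 ^ 2 - x 3 ^ 2

/-- The Euclidean topology `E` on `M`. -/
noncomputable def E : TopologicalSpace M := inferInstance

/-- The light cone of `x`. -/
def lightCone (x : M) : Set M := {y | Q (y - x) = 0}

/-- The time cone of `x`. -/
def timeCone (x : M) : Set M := {x} ∪ {y | Q (y - x) > 0}

/-- The space cone of `x`. -/
def spaceCone (x : M) : Set M := {x} ∪ {y | Q (y - x) < 0}

/-- The basic open sets `Z_ε(x) = B_ε^E(x) ∩ (C^T(x) ∪ C^S(x))` of the Zeeman `Z` topology. -/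
def Zset (x : M) (ε : ℝ) : Set M := Metric.ball x ε ∩ (timeCone x ∪ spaceCone x)

/-- The Zeeman `Z` topology, generated by the base of the sets `Z_ε(x)`. -/
def ZeemanZ : TopologicalSpace M :=
  TopologicalSpace.generateFrom {s | ∃ x : M, ∃ ε : ℝ, 0 < ε ∧ s = Zset x ε}

/-- The irreflexive horismos relation `x → y`. -/
def horismos (x y : M) : Prop := y ≠ x ∧ Q (y - x) = 0 ∧ (y - x) 0 > 0

/-- The future null cone `N⁺(x)`. -/
def Nplus (x : M) : Set M := {y | horismos x y}

/-- The past null cone `N⁻(x)`. -/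
def Nminus (x : M) : Set M := {y | horismos y x}

/-- The interval topology `T_in^→` induced by the irreflexive horismos relation,
generated by the subbase of complements of future and past null cones. -/
def Tin : TopologicalSpace M :=
  TopologicalSpace.generateFrom
    ({s | ∃ x : M, s = univ \ Nplus x} ∪ {s | ∃ x : M, s = univ \ Nminus x})

/-- A time axis: an affine line with timelike direction. -/
def IsTimeAxis (L : Set M) : Prop :=
  ∃ a v : M, Q v > 0 ∧ L = {p | ∃ t : ℝ, p = a + t • v}

/-- A space axis: an affine 3-flat whose direction is a 3-dimensional subspace
on which `Q` is negative definite. -/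
def IsSpaceAxis (L : Set M) : Prop :=
  ∃ a : M, ∃ W : Submodule ℝ M, Module.finrank ℝ W = 3 ∧
    (∀ w ∈ W, w ≠ 0 → Q w < 0) ∧ L = {p | ∃ w ∈ W, p = a + w}

/-- A topology `t` on `M` induces the Euclidean subspace topology on every time axis
and on every space axis. -/
def InducesEuclideanOnAxes (t : TopologicalSpace M) : Prop :=
  (∀ L : Set M, IsTimeAxis L →
    TopologicalSpace.induced (Subtype.val : L → M) t =
      TopologicalSpace.induced (Subtype.val : L → M) E) ∧
  (∀ L : Set M, IsSpaceAxis L →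
    TopologicalSpace.induced (Subtype.val : L → M) t =
      TopologicalSpace.induced (Subtype.val : L → M) E)

/-- Zeeman's Fine topology `F`: the finest topology on `M` inducing the Euclidean topology
on every time and space axis.  (In Mathlib's lattice of topologies, `≤` means "finer",
so the finest such topology is the infimum of the family.) -/
noncomputable def FineF : TopologicalSpace M :=
  sInf {t : TopologicalSpace M | InducesEuclideanOnAxes t}

/-- The chronological order `x ≪ y`. -/
def chron (x y : M) : Prop := Q (y - x) > 0 ∧ (y - x) 0 > 0

-- basic Q lemmas
lemma Q_smul (c : ℝ) (x : M) : Q (c • x) = c ^ 2 * Q x := by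
  simp only [Q, PiLp.smul_apply, smul_eq_mul]; ring

lemma Q_neg (x : M) : Q (-x) = Q x := by
  simp only [Q, PiLp.neg_apply]; ring

lemma Q_zero : Q 0 = 0 := by simp [Q]

lemma continuous_Q : Continuous Q := by
  have h : ∀ i : Fin 4, Continuous fun x : M => x i := fun i => (EuclideanSpace.proj i).continuous
  unfold Q; fun_prop

lemma ne_of_chron {x y : M} (h : chron x y) : y ≠ x := by
  intro he; have := h.2; rw [he, sub_self] at this; simp at this

lemma chron_Q_pos {x y : M} (h : chron x y ∨ chron y x) : Q (y - x) > 0 := by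
  rcases h with h | h
  · exact h.1
  · have := h.1; rwa [← neg_sub y x, Q_neg] at this

-- lines
def line (a v : M) : Set M := {p | ∃ t : ℝ, p = a + t • v}

lemma mem_line_self (a v : M) : a ∈ line a v := ⟨0, by simp⟩

lemma isTimeAxis_line {a v : M} (hv : Q v > 0) : IsTimeAxis (line a v) := ⟨a, v, hv, rfl⟩

lemma line_smul {a v : M} {c : ℝ} (hc : c ≠ 0) : line a (c • v) = line a v := by
  ext p; constructor
  · rintro ⟨t, rfl⟩; exact ⟨t * c, by rw [mul_smul]⟩
  · rintro ⟨t, rfl⟩; exact ⟨t / c, by rw [smul_smul, div_mul_cancel₀ _ hc]⟩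

lemma line_self_mem {a v x : M} (hx : x ∈ line a v) : line a v = line x v := by
  obtain ⟨s, rfl⟩ := hx
  ext p; constructor
  · rintro ⟨t, rfl⟩; exact ⟨t - s, by rw [sub_smul]; abel⟩
  · rintro ⟨t, rfl⟩; exact ⟨s + t, by rw [add_smul]; abel⟩

lemma line_eq_of_mem {a v z : M} (hz : z ∈ line a v) (hne : z ≠ a) :
    line a v = line a (z - a) := by
  obtain ⟨c, hc⟩ := hz
  have hzc : z - a = c • v := by rw [hc]; abel
  have hc0 : c ≠ 0 := by rintro rfl; simp at hc; exact hne hc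
  rw [hzc, line_smul hc0]

lemma line_unique {a v w : M} {z : M} (hzv : z ∈ line a v) (hzw : z ∈ line a w)
    (hne : z ≠ a) : line a v = line a w := by
  rw [line_eq_of_mem hzv hne, line_eq_of_mem hzw hne]

lemma timeAxis_eq_line {A : Set M} (hA : IsTimeAxis A) {x y : M} (hx : x ∈ A) (hy : y ∈ A)
    (hne : y ≠ x) : A = line x (y - x) := by
  obtain ⟨a, v, _, rfl⟩ := hA
  have hx' : x ∈ line a v := hx
  have h1 : ({p | ∃ t : ℝ, p = a + t • v} : Set M) = line x v := line_self_mem hx'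
  rw [h1] at hy ⊢
  exact line_eq_of_mem hy hne

lemma isClosed_line (a v : M) : IsClosed (line a v) := by
  have : line a v = (fun w : M => a + w) '' (Submodule.span ℝ {v} : Set M) := by
    ext p; constructor
    · rintro ⟨t, rfl⟩; exact ⟨t • v, Submodule.smul_mem _ _ (Submodule.mem_span_singleton_self v), rfl⟩
    · rintro ⟨w, hw, rfl⟩
      obtain ⟨t, rfl⟩ := Submodule.mem_span_singleton.mp hw
      exact ⟨t, rfl⟩
  rw [this]
  exact (Homeomorph.addLeft a).isClosedMap _ (Submodule.closed_of_finiteDimensional _)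

lemma isClosed_axis {A : Set M} (hA : IsTimeAxis A ∨ IsSpaceAxis A) : IsClosed A := by
  rcases hA with ⟨a, v, _, rfl⟩ | ⟨a, W, _, _, rfl⟩
  · exact isClosed_line a v
  · have : {p | ∃ w ∈ W, p = a + w} = (fun w : M => a + w) '' (W : Set M) := by
      ext p
      constructor
      · rintro ⟨w, hw, rfl⟩; exact ⟨w, hw, rfl⟩
      · rintro ⟨w, hw, rfl⟩; exact ⟨w, hw, rfl⟩
    rw [this]
    exact (Homeomorph.addLeft a).isClosedMap _ (Submodule.closed_of_finiteDimensional _)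


/-! ### The topology `Tstar` of sets which are relatively open on every axis -/

def Axis (A : Set M) : Prop := IsTimeAxis A ∨ IsSpaceAxis A

def Tstar : TopologicalSpace M where
  IsOpen U := ∀ A : Set M, Axis A → IsOpen ((Subtype.val : A → M) ⁻¹' U)
  isOpen_univ := by intro A _; simp
  isOpen_inter := by
    intro U V hU hV A hA
    exact (hU A hA).inter (hV A hA)
  isOpen_sUnion := by
    intro S hS A hA
    rw [Set.preimage_sUnion]
    exact isOpen_biUnion fun U hU => hS U hU A hA

lemma euclidean_mem : InducesEuclideanOnAxes E := ⟨fun L _ => rfl, fun L _ => rfl⟩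

lemma subtype_induced (A : Set M) :
    (instTopologicalSpaceSubtype : TopologicalSpace A) =
      TopologicalSpace.induced (Subtype.val : A → M) E := rfl

lemma tstar_mem : InducesEuclideanOnAxes Tstar := by
  constructor <;> intro L hL <;>
  · apply le_antisymm
    · -- induced Tstar ≤ induced E : every E-open is Tstar-open
      apply induced_mono
      exact TopologicalSpace.le_def.mpr fun U hU A hA => hU.preimage continuous_subtype_val
    · -- every Tstar-open restricts to a relatively E-open set
      intro V hV
      obtain ⟨U, hU, rfl⟩ := hV
      rw [← subtype_induced]
      exact hU L (by first | exact Or.inl hL | exact Or.inr hL)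

lemma fineF_le_tstar : FineF ≤ Tstar := sInf_le tstar_mem

lemma fineF_le_E : FineF ≤ E := sInf_le euclidean_mem

lemma fineF_isOpen {U : Set M}
    (h : ∀ A : Set M, Axis A → IsOpen ((Subtype.val : A → M) ⁻¹' U)) :
    IsOpen[FineF] U :=
  fineF_le_tstar _ h

/-! ### cones -/

lemma cones_eq (x : M) :
    timeCone x ∪ spaceCone x = insert x {y | Q (y - x) ≠ 0} := by
  ext y
  simp only [timeCone, spaceCone, Set.mem_union, Set.mem_singleton_iff, Set.mem_setOf_eq,
    Set.mem_insert_iff]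
  constructor
  · rintro ((h | h) | (h | h))
    · exact Or.inl h
    · exact Or.inr (ne_of_gt h)
    · exact Or.inl h
    · exact Or.inr (ne_of_lt h)
  · rintro (h | h)
    · exact Or.inl (Or.inl h)
    · rcases lt_or_gt_of_ne h with h | h
      · exact Or.inr (Or.inr h)
      · exact Or.inl (Or.inr h)

lemma axis_subset_cones {A : Set M} (hA : Axis A) {x : M} (hx : x ∈ A) :
    A ⊆ timeCone x ∪ spaceCone x := by
  rcases hA with ⟨a, v, hv, rfl⟩ | ⟨a, W, _, hW, rfl⟩
  · obtain ⟨s, rfl⟩ := hx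
    rintro p ⟨t, rfl⟩
    rcases eq_or_ne t s with rfl | hts
    · exact Or.inl (Or.inl rfl)
    · left; right
      have : a + t • v - (a + s • v) = (t - s) • v := by
        rw [sub_smul]; abel
      rw [Set.mem_setOf_eq, this, Q_smul]
      exact mul_pos (sq_pos_of_ne_zero (sub_ne_zero_of_ne hts)) hv
  · obtain ⟨w₀, hw₀, rfl⟩ := hx
    rintro p ⟨w, hw, rfl⟩
    rcases eq_or_ne w w₀ with rfl | hne
    · exact Or.inr (Or.inl rfl)
    · right; right
      have : a + w - (a + w₀) = w - w₀ := by abel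
      rw [Set.mem_setOf_eq, this]
      exact hW _ (W.sub_mem hw hw₀) (sub_ne_zero_of_ne hne)

lemma zset_relOpen {x : M} {ε : ℝ} {A : Set M} (hA : Axis A) :
    IsOpen ((Subtype.val : A → M) ⁻¹' Zset x ε) := by
  unfold Zset
  rw [Set.preimage_inter]
  apply IsOpen.inter
  · exact Metric.isOpen_ball.preimage continuous_subtype_val
  · by_cases hx : x ∈ A
    · have : (Subtype.val : A → M) ⁻¹' (timeCone x ∪ spaceCone x) = Set.univ := by
        rw [Set.eq_univ_iff_forall]; intro p
        exact axis_subset_cones hA hx p.2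
      rw [this]; exact isOpen_univ
    · rw [cones_eq]
      have : (Subtype.val : A → M) ⁻¹' insert x {y | Q (y - x) ≠ 0} =
          (Subtype.val : A → M) ⁻¹' {y | Q (y - x) ≠ 0} := by
        ext p; simp only [Set.mem_preimage, Set.mem_insert_iff, Set.mem_setOf_eq]
        constructor
        · rintro (h | h)
          · exact absurd (h ▸ p.2) hx
          · exact h
        · exact Or.inr
      rw [this]
      have hopen : IsOpen {y : M | Q (y - x) ≠ 0} :=
        isOpen_ne.preimage (continuous_Q.comp (continuous_id.sub continuous_const))
      exact hopen.preimage continuous_subtype_val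

/-! ### Euclidean continuity and the core discontinuity lemma -/

lemma spaceAxis_Q_neg {A : Set M} (hA : IsSpaceAxis A) {x y : M} (hx : x ∈ A) (hy : y ∈ A)
    (hne : y ≠ x) : Q (y - x) < 0 := by
  obtain ⟨a, W, _, hW, rfl⟩ := hA
  obtain ⟨w₀, hw₀, rfl⟩ := hx
  obtain ⟨w, hw, rfl⟩ := hy
  have h1 : a + w - (a + w₀) = w - w₀ := by abel
  rw [h1]
  refine hW _ (W.sub_mem hw hw₀) (sub_ne_zero_of_ne ?_)
  intro h; exact hne (by rw [h])

lemma contE {f : ℝ → M} (hcont : @ContinuousOn ℝ M _ FineF f (Icc 0 1)) :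
    ContinuousOn f (Icc 0 1) := fun x hx =>
  Filter.Tendsto.mono_right (hcont x hx) (nhds_mono fineF_le_E)

lemma isOpen_mem_nhds' {α : Type*} (t : TopologicalSpace α) {U : Set α} {x : α}
    (h : IsOpen[t] U) (hx : x ∈ U) : U ∈ @nhds α t x := by
  letI := t; exact h.mem_nhds hx

lemma core {f : ℝ → M}
    (hcont : @ContinuousOn ℝ M _ FineF f (Icc 0 1))
    (hord : ∀ s ∈ Icc (0:ℝ) 1, ∀ t ∈ Icc (0:ℝ) 1, s < t → chron (f s) (f t))
    {t : ℝ} (ht : t ∈ Icc (0:ℝ) 1) {s : ℕ → ℝ}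
    (hs : ∀ n, s n ∈ Icc (0:ℝ) 1) (hne : ∀ n, s n ≠ t)
    (hlim : Filter.Tendsto s Filter.atTop (𝓝 t))
    (hsub : ∀ A : Set M, IsTimeAxis A → f t ∈ A → {n | f (s n) ∈ A}.Subsingleton) : False := by
  classical
  have hchron : ∀ n, chron (f t) (f (s n)) ∨ chron (f (s n)) (f t) := by
    intro n
    rcases lt_or_gt_of_ne (hne n) with h | h
    · exact Or.inr (hord _ (hs n) _ ht h)
    · exact Or.inl (hord _ ht _ (hs n) h)
  have hQpos : ∀ n, Q (f (s n) - f t) > 0 := fun n => chron_Q_pos (hchron n)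
  have hfne : ∀ n, f (s n) ≠ f t := by
    intro n
    rcases hchron n with h | h
    · exact ne_of_chron h
    · exact fun he => ne_of_chron h he.symm
  set S : Set M := Set.range (fun n => f (s n)) with hS
  -- f ∘ s tends to f t
  have hsin : Filter.Tendsto s Filter.atTop (𝓝[Icc (0:ℝ) 1] t) :=
    tendsto_nhdsWithin_of_tendsto_nhds_of_eventually_within s hlim
      (Filter.Eventually.of_forall hs)
  have hflim : Filter.Tendsto (fun n => f (s n)) Filter.atTop (𝓝 (f t)) :=
    (contE hcont t ht).tendsto.comp hsin
  have hK : IsCompact (insert (f t) S) := hflim.isCompact_insert_range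
  set U : Set M := Zset (f t) 1 \ S with hU
  have hUopen : IsOpen[FineF] U := by
    apply fineF_isOpen
    intro A hA
    have hpre : (Subtype.val : A → M) ⁻¹' U =
        (Subtype.val : A → M) ⁻¹' Zset (f t) 1 \ (Subtype.val : A → M) ⁻¹' S := rfl
    rw [hpre]
    apply IsOpen.sdiff (zset_relOpen hA)
    -- S is relatively closed on every axis
    by_cases hft : f t ∈ A
    · rcases hA with hTA | hSA
      · -- time axis through f t : finitely many points
        have hsubA : {n | f (s n) ∈ A}.Subsingleton := hsub A hTA hft
        have hSAfin : (S ∩ A).Finite := by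
          apply Set.Finite.subset (Set.Subsingleton.finite (hsubA.image (fun n => f (s n))))
          rintro z ⟨⟨n, rfl⟩, hzA⟩
          exact ⟨n, hzA, rfl⟩
        have heq : (Subtype.val : A → M) ⁻¹' S = (Subtype.val : A → M) ⁻¹' (S ∩ A) := by
          ext p
          exact ⟨fun h => ⟨h, p.2⟩, fun h => h.1⟩
        rw [heq]
        exact (hSAfin.preimage (Subtype.val_injective.injOn)).isClosed
      · -- space axis through f t : no points
        have : (Subtype.val : A → M) ⁻¹' S = ∅ := by
          rw [Set.eq_empty_iff_forall_notMem]
          rintro ⟨p, hp⟩ ⟨n, hn⟩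
          simp only at hn
          have hQn : Q (f (s n) - f t) < 0 := spaceAxis_Q_neg hSA hft (hn ▸ hp) (hfne n)
          exact absurd (hQpos n) (not_lt.mpr hQn.le)
        rw [this]; exact isClosed_empty
    · -- f t ∉ A : S ∩ A = (insert (f t) S) ∩ A, closed by compactness
      have heq : (Subtype.val : A → M) ⁻¹' S =
          (Subtype.val : A → M) ⁻¹' (insert (f t) S) := by
        ext p
        simp only [Set.mem_preimage, Set.mem_insert_iff]
        constructor
        · exact Or.inr
        · rintro (h | h)
          · exact absurd (h ▸ p.2) hft
          · exact h
      rw [heq]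
      exact (hK.isClosed).preimage continuous_subtype_val
  have hftU : f t ∈ U := by
    constructor
    · exact ⟨Metric.mem_ball_self one_pos, Or.inl (Or.inl rfl)⟩
    · rintro ⟨n, hn⟩
      exact hfne n hn
  have hUnhds : U ∈ @nhds M FineF (f t) := isOpen_mem_nhds' FineF hUopen hftU
  have hpre : f ⁻¹' U ∈ 𝓝[Icc (0:ℝ) 1] t := hcont t ht hUnhds
  have hev : ∀ᶠ n in Filter.atTop, f (s n) ∈ U := hsin hpre
  obtain ⟨n, hn⟩ := hev.exists
  exact hn.2 ⟨n, rfl⟩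

/-! ### Avoidance of finitely many lines (right version) -/

lemma Ioc_subset_unit {t u : ℝ} (ht0 : 0 ≤ t) (hu1 : u ≤ 1) : Ioc t u ⊆ Icc (0:ℝ) 1 :=
  fun x hx => ⟨le_trans ht0 hx.1.le, le_trans hx.2 hu1⟩

lemma avoid_right {f : ℝ → M}
    (hcE : ContinuousOn f (Icc 0 1))
    (hord : ∀ s ∈ Icc (0:ℝ) 1, ∀ t ∈ Icc (0:ℝ) 1, s < t → chron (f s) (f t))
    {t u : ℝ} (ht0 : 0 ≤ t) (htu : t < u) (hu1 : u ≤ 1)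
    (H : ∀ v : M, Q v > 0 → ¬ (f '' Ioc t u ⊆ line (f t) v)) :
    ∀ (n : ℕ) (G : Finset ℝ), G.card ≤ n → (∀ x ∈ G, x ∈ Ioc t 1) →
      ¬ (∀ y ∈ Ioc t u, ∃ x ∈ G, f y ∈ line (f t) (f x - f t)) := by
  have ht' : t ∈ Icc (0:ℝ) 1 := ⟨ht0, le_trans htu.le hu1⟩
  intro n
  induction n with
  | zero =>
    intro G hcard _ hcov
    rw [Nat.le_zero, Finset.card_eq_zero] at hcard
    subst hcard
    obtain ⟨x, hx, _⟩ := hcov u ⟨htu, le_refl u⟩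
    exact absurd hx (Finset.notMem_empty x)
  | succ n IH =>
    intro G hcard hG hcov
    rcases G.eq_empty_or_nonempty with rfl | ⟨x₀, hx₀⟩
    · obtain ⟨x, hx, _⟩ := hcov u ⟨htu, le_refl u⟩
      exact absurd hx (Finset.notMem_empty x)
    · set L : ℝ → Set M := fun x => line (f t) (f x - f t) with hL
      have hQdir : ∀ x ∈ G, Q (f x - f t) > 0 := by
        intro x hx
        have hx' := hG x hx
        exact (hord t ht' x ⟨le_trans ht0 hx'.1.le, hx'.2⟩ hx'.1).1
      set K : Set M := f '' Ioc t u with hK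
      have hKpre : IsPreconnected K :=
        isPreconnected_Ioc.image f (hcE.mono (Ioc_subset_unit ht0 hu1))
      set A : Set M := L x₀ with hA
      set B : Set M := ⋃ x ∈ G.erase x₀, L x with hB
      have hKsub : K ⊆ A ∪ B := by
        rintro z ⟨y, hy, rfl⟩
        obtain ⟨x, hxG, hfx⟩ := hcov y hy
        rcases eq_or_ne x x₀ with rfl | hne
        · exact Or.inl hfx
        · exact Or.inr (Set.mem_biUnion (Finset.mem_erase.mpr ⟨hne, hxG⟩) hfx)
      have hAc : IsClosed A := isClosed_line _ _
      have hBc : IsClosed B :=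
        Set.Finite.isClosed_biUnion (G.erase x₀).finite_toSet (fun i _ => isClosed_line _ _)
      have hcard' : (G.erase x₀).card ≤ n := by
        have := Finset.card_erase_of_mem hx₀
        omega
      have hG' : ∀ x ∈ G.erase x₀, x ∈ Ioc t 1 := fun x hx => hG x (Finset.mem_of_mem_erase hx)
      rcases Set.eq_empty_or_nonempty (K ∩ A) with hKA | hKA
      · -- K ⊆ B
        apply IH (G.erase x₀) hcard' hG'
        intro y hy
        have hz : f y ∈ A ∪ B := hKsub ⟨y, hy, rfl⟩
        rcases hz with hz | hz
        · exact (Set.eq_empty_iff_forall_notMem.mp hKA (f y) ⟨⟨y, hy, rfl⟩, hz⟩).elim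
        · obtain ⟨x, hx, hfx⟩ := Set.mem_iUnion₂.mp hz
          exact ⟨x, hx, hfx⟩
      rcases Set.eq_empty_or_nonempty (K ∩ B) with hKB | hKB
      · -- K ⊆ A : a single line suffices, contradiction with H
        apply H (f x₀ - f t) (hQdir x₀ hx₀)
        intro z hz
        rcases hKsub hz with h | h
        · exact h
        · exact (Set.eq_empty_iff_forall_notMem.mp hKB z ⟨hz, h⟩).elim
      · obtain ⟨z, hzK, hzA, hzB⟩ :=
          isPreconnected_closed_iff.mp hKpre A B hAc hBc hKsub hKA hKB
        obtain ⟨y, hy, rfl⟩ := hzK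
        have hzne : f y ≠ f t :=
          ne_of_chron (hord t ht' y ⟨le_trans ht0 hy.1.le, le_trans hy.2 hu1⟩ hy.1)
        obtain ⟨x₁, hx₁, hfx₁⟩ := Set.mem_iUnion₂.mp hzB
        have hLeq : L x₀ = L x₁ := line_unique hzA hfx₁ hzne
        apply IH (G.erase x₀) hcard' hG'
        intro y' hy'
        obtain ⟨x, hxG, hfx⟩ := hcov y' hy'
        rcases eq_or_ne x x₀ with rfl | hne
        · exact ⟨x₁, hx₁, show f y' ∈ L x₁ from hLeq ▸ hfx⟩
        · exact ⟨x, Finset.mem_erase.mpr ⟨hne, hxG⟩, hfx⟩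

lemma right_local {f : ℝ → M}
    (hcont : @ContinuousOn ℝ M _ FineF f (Icc 0 1))
    (hord : ∀ s ∈ Icc (0:ℝ) 1, ∀ t ∈ Icc (0:ℝ) 1, s < t → chron (f s) (f t))
    {t : ℝ} (ht : t ∈ Icc (0:ℝ) 1) (ht1 : t < 1) :
    ∃ u, t < u ∧ u ≤ 1 ∧ ∃ v : M, Q v > 0 ∧ ∀ s ∈ Icc t u, f s ∈ line (f t) v := by
  by_contra h
  push_neg at h
  have H0 : ∀ u, t < u → u ≤ 1 → ∀ v : M, Q v > 0 → ¬ (f '' Ioc t u ⊆ line (f t) v) := by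
    intro u hu hu1 v hv hsub
    obtain ⟨s, hs, hns⟩ := h u hu hu1 v hv
    apply hns
    rcases eq_or_lt_of_le hs.1 with rfl | hlt
    · exact mem_line_self _ _
    · exact hsub ⟨s, ⟨hlt, hs.2⟩, rfl⟩
  set P : ℝ → Prop := fun x => x ∈ Ioc t 1 with hP
  set r : ℝ → ℝ → Prop := fun x y => y ≤ (t + x)/2 ∧ f y ∉ line (f t) (f x - f t) with hr
  have hfin : ∀ G : Finset ℝ, (∀ x ∈ G, P x) → ∃ y, P y ∧ ∀ x ∈ G, r x y := by
    intro G hG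
    classical
    set u₀ : ℝ := if hGn : G.Nonempty then
        min ((t+1)/2) (G.inf' hGn (fun x => (t + x)/2)) else (t+1)/2 with hu₀
    have hu₀props : t < u₀ ∧ u₀ ≤ (t+1)/2 ∧ ∀ x ∈ G, u₀ ≤ (t + x)/2 := by
      by_cases hGn : G.Nonempty
      · rw [hu₀]; simp only [dif_pos hGn]
        refine ⟨lt_min (by linarith) ?_, min_le_left _ _, fun x hx => le_trans (min_le_right _ _)
          (Finset.inf'_le _ hx)⟩
        rw [Finset.lt_inf'_iff]
        intro x hx
        have := (hG x hx).1
        linarith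
      · rw [hu₀]; simp only [dif_neg hGn]
        exact ⟨by linarith, le_refl _, fun x hx => absurd ⟨x, hx⟩ hGn⟩
    obtain ⟨hu₀t, hu₀half, hu₀G⟩ := hu₀props
    have hu₀1 : u₀ ≤ 1 := by linarith
    have hnc := avoid_right (contE hcont) hord ht.1 hu₀t hu₀1
      (fun v hv => H0 u₀ hu₀t hu₀1 v hv) G.card G (le_refl _) (fun x hx => hG x hx)
    push_neg at hnc
    obtain ⟨y, hy, hyavoid⟩ := hnc
    exact ⟨y, ⟨hy.1, le_trans hy.2 hu₀1⟩, fun x hx => ⟨le_trans hy.2 (hu₀G x hx), hyavoid x hx⟩⟩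
  obtain ⟨g, hgP, hgr⟩ := exists_seq_of_forall_finset_exists P r hfin
  -- convergence of g to t
  have hgt : ∀ n, t < g n := fun n => (hgP n).1
  have hgeom : ∀ n, g n - t ≤ (g 0 - t) * (1/2)^n := by
    intro n
    induction n with
    | zero => simp
    | succ n IHn =>
      have h1 : g (n+1) ≤ (t + g n)/2 := (hgr n (n+1) (Nat.lt_succ_self n)).1
      have h2 : ((1:ℝ)/2)^(n+1) = (1/2)^n / 2 := by rw [pow_succ]; ring
      rw [h2]
      have h0 : (0:ℝ) < g 0 - t := by have := hgt 0; linarith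
      nlinarith [hgt n]
  have hlim : Filter.Tendsto g Filter.atTop (𝓝 t) := by
    have hup : Filter.Tendsto (fun n => t + (g 0 - t) * (1/2:ℝ)^n) Filter.atTop (𝓝 t) := by
      have : Filter.Tendsto (fun n => (g 0 - t) * (1/2:ℝ)^n) Filter.atTop (𝓝 0) := by
        simpa using (tendsto_pow_atTop_nhds_zero_of_lt_one (by norm_num : (0:ℝ) ≤ 1/2)
          (by norm_num : (1:ℝ)/2 < 1)).const_mul (g 0 - t)
      simpa using Filter.Tendsto.const_add t this
    apply tendsto_of_tendsto_of_tendsto_of_le_of_le tendsto_const_nhds hup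
    · exact fun n => (hgt n).le
    · exact fun n => by have := hgeom n; linarith
  -- contradiction via core
  refine core hcont hord ht (s := g) (fun n => ⟨le_trans ht.1 (hgt n).le, (hgP n).2⟩)
    (fun n => ne_of_gt (hgt n)) hlim ?_
  intro A hTA hft m hm n hn
  by_contra hmn
  have key : ∀ a b : ℕ, a < b → f (g a) ∈ A → f (g b) ∈ A → False := by
    intro a b hab hfa hfb
    have hchr : chron (f t) (f (g a)) :=
      hord t ⟨ht.1, ht.2⟩ (g a) ⟨le_trans ht.1 (hgt a).le, (hgP a).2⟩ (hgt a)
    have hAeq : A = line (f t) (f (g a) - f t) :=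
      timeAxis_eq_line hTA hft hfa (ne_of_chron hchr)
    exact (hgr a b hab).2 (hAeq ▸ hfb)
  rcases lt_trichotomy m n with h | h | h
  · exact key m n h hm hn
  · exact hmn h
  · exact key n m h hn hm

/-! ### Left versions -/

lemma Ico_subset_unit {u t : ℝ} (hu0 : 0 ≤ u) (ht1 : t ≤ 1) : Ico u t ⊆ Icc (0:ℝ) 1 :=
  fun x hx => ⟨le_trans hu0 hx.1, le_trans hx.2.le ht1⟩

lemma avoid_left {f : ℝ → M}
    (hcE : ContinuousOn f (Icc 0 1))
    (hord : ∀ s ∈ Icc (0:ℝ) 1, ∀ t ∈ Icc (0:ℝ) 1, s < t → chron (f s) (f t))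
    {t u : ℝ} (hu0 : 0 ≤ u) (hut : u < t) (ht1 : t ≤ 1)
    (H : ∀ v : M, Q v > 0 → ¬ (f '' Ico u t ⊆ line (f t) v)) :
    ∀ (n : ℕ) (G : Finset ℝ), G.card ≤ n → (∀ x ∈ G, x ∈ Ico 0 t) →
      ¬ (∀ y ∈ Ico u t, ∃ x ∈ G, f y ∈ line (f t) (f x - f t)) := by
  have ht' : t ∈ Icc (0:ℝ) 1 := ⟨le_trans hu0 hut.le, ht1⟩
  intro n
  induction n with
  | zero =>
    intro G hcard _ hcov
    rw [Nat.le_zero, Finset.card_eq_zero] at hcard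
    subst hcard
    obtain ⟨x, hx, _⟩ := hcov u ⟨le_refl u, hut⟩
    exact absurd hx (Finset.notMem_empty x)
  | succ n IH =>
    intro G hcard hG hcov
    rcases G.eq_empty_or_nonempty with rfl | ⟨x₀, hx₀⟩
    · obtain ⟨x, hx, _⟩ := hcov u ⟨le_refl u, hut⟩
      exact absurd hx (Finset.notMem_empty x)
    · set L : ℝ → Set M := fun x => line (f t) (f x - f t) with hL
      have hQdir : ∀ x ∈ G, Q (f x - f t) > 0 := by
        intro x hx
        have hx' := hG x hx
        have h1 := (hord x ⟨hx'.1, le_trans hx'.2.le ht1⟩ t ht' hx'.2).1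
        rwa [← neg_sub (f x) (f t), Q_neg] at h1
      set K : Set M := f '' Ico u t with hK
      have hKpre : IsPreconnected K :=
        isPreconnected_Ico.image f (hcE.mono (Ico_subset_unit hu0 ht1))
      set A : Set M := L x₀ with hA
      set B : Set M := ⋃ x ∈ G.erase x₀, L x with hB
      have hKsub : K ⊆ A ∪ B := by
        rintro z ⟨y, hy, rfl⟩
        obtain ⟨x, hxG, hfx⟩ := hcov y hy
        rcases eq_or_ne x x₀ with rfl | hne
        · exact Or.inl hfx
        · exact Or.inr (Set.mem_biUnion (Finset.mem_erase.mpr ⟨hne, hxG⟩) hfx)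
      have hAc : IsClosed A := isClosed_line _ _
      have hBc : IsClosed B :=
        Set.Finite.isClosed_biUnion (G.erase x₀).finite_toSet (fun i _ => isClosed_line _ _)
      have hcard' : (G.erase x₀).card ≤ n := by
        have := Finset.card_erase_of_mem hx₀
        omega
      have hG' : ∀ x ∈ G.erase x₀, x ∈ Ico 0 t := fun x hx => hG x (Finset.mem_of_mem_erase hx)
      rcases Set.eq_empty_or_nonempty (K ∩ A) with hKA | hKA
      · apply IH (G.erase x₀) hcard' hG'
        intro y hy
        have hz : f y ∈ A ∪ B := hKsub ⟨y, hy, rfl⟩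
        rcases hz with hz | hz
        · exact (Set.eq_empty_iff_forall_notMem.mp hKA (f y) ⟨⟨y, hy, rfl⟩, hz⟩).elim
        · obtain ⟨x, hx, hfx⟩ := Set.mem_iUnion₂.mp hz
          exact ⟨x, hx, hfx⟩
      rcases Set.eq_empty_or_nonempty (K ∩ B) with hKB | hKB
      · apply H (f x₀ - f t) (hQdir x₀ hx₀)
        intro z hz
        rcases hKsub hz with h | h
        · exact h
        · exact (Set.eq_empty_iff_forall_notMem.mp hKB z ⟨hz, h⟩).elim
      · obtain ⟨z, hzK, hzA, hzB⟩ :=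
          isPreconnected_closed_iff.mp hKpre A B hAc hBc hKsub hKA hKB
        obtain ⟨y, hy, rfl⟩ := hzK
        have hzne : f y ≠ f t :=
          Ne.symm (ne_of_chron (hord y ⟨le_trans hu0 hy.1, le_trans hy.2.le ht1⟩ t ht' hy.2))
        obtain ⟨x₁, hx₁, hfx₁⟩ := Set.mem_iUnion₂.mp hzB
        have hLeq : L x₀ = L x₁ := line_unique hzA hfx₁ hzne
        apply IH (G.erase x₀) hcard' hG'
        intro y' hy'
        obtain ⟨x, hxG, hfx⟩ := hcov y' hy'
        rcases eq_or_ne x x₀ with rfl | hne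
        · exact ⟨x₁, hx₁, show f y' ∈ L x₁ from hLeq ▸ hfx⟩
        · exact ⟨x, Finset.mem_erase.mpr ⟨hne, hxG⟩, hfx⟩

lemma left_local {f : ℝ → M}
    (hcont : @ContinuousOn ℝ M _ FineF f (Icc 0 1))
    (hord : ∀ s ∈ Icc (0:ℝ) 1, ∀ t ∈ Icc (0:ℝ) 1, s < t → chron (f s) (f t))
    {t : ℝ} (ht : t ∈ Icc (0:ℝ) 1) (ht0 : 0 < t) :
    ∃ u, 0 ≤ u ∧ u < t ∧ ∃ v : M, Q v > 0 ∧ ∀ s ∈ Icc u t, f s ∈ line (f t) v := by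
  by_contra h
  push_neg at h
  have H0 : ∀ u, 0 ≤ u → u < t → ∀ v : M, Q v > 0 → ¬ (f '' Ico u t ⊆ line (f t) v) := by
    intro u hu0 hut v hv hsub
    obtain ⟨s, hs, hns⟩ := h u hu0 hut v hv
    apply hns
    rcases eq_or_lt_of_le hs.2 with rfl | hlt
    · exact mem_line_self _ _
    · exact hsub ⟨s, ⟨hs.1, hlt⟩, rfl⟩
  set P : ℝ → Prop := fun x => x ∈ Ico 0 t with hP
  set r : ℝ → ℝ → Prop := fun x y => (t + x)/2 ≤ y ∧ f y ∉ line (f t) (f x - f t) with hr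
  have hfin : ∀ G : Finset ℝ, (∀ x ∈ G, P x) → ∃ y, P y ∧ ∀ x ∈ G, r x y := by
    intro G hG
    classical
    set u₀ : ℝ := if hGn : G.Nonempty then
        max (t/2) (G.sup' hGn (fun x => (t + x)/2)) else t/2 with hu₀
    have hu₀props : u₀ < t ∧ t/2 ≤ u₀ ∧ ∀ x ∈ G, (t + x)/2 ≤ u₀ := by
      by_cases hGn : G.Nonempty
      · rw [hu₀]; simp only [dif_pos hGn]
        refine ⟨max_lt (by linarith) ?_, le_max_left _ _, fun x hx => le_trans
          (Finset.le_sup' (fun x => (t + x)/2) hx) (le_max_right _ _)⟩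
        rw [Finset.sup'_lt_iff]
        intro x hx
        have := (hG x hx).2
        linarith
      · rw [hu₀]; simp only [dif_neg hGn]
        exact ⟨by linarith, le_refl _, fun x hx => absurd ⟨x, hx⟩ hGn⟩
    obtain ⟨hu₀t, hu₀half, hu₀G⟩ := hu₀props
    have hu₀0 : 0 ≤ u₀ := by linarith
    have hnc := avoid_left (contE hcont) hord hu₀0 hu₀t ht.2
      (fun v hv => H0 u₀ hu₀0 hu₀t v hv) G.card G (le_refl _) (fun x hx => hG x hx)
    push_neg at hnc
    obtain ⟨y, hy, hyavoid⟩ := hnc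
    exact ⟨y, ⟨le_trans hu₀0 hy.1, hy.2⟩, fun x hx => ⟨le_trans (hu₀G x hx) hy.1, hyavoid x hx⟩⟩
  obtain ⟨g, hgP, hgr⟩ := exists_seq_of_forall_finset_exists P r hfin
  have hgt : ∀ n, g n < t := fun n => (hgP n).2
  have hg0 : ∀ n, 0 ≤ g n := fun n => (hgP n).1
  have hgeom : ∀ n, t - g n ≤ (t - g 0) * (1/2)^n := by
    intro n
    induction n with
    | zero => simp
    | succ n IHn =>
      have h1 : (t + g n)/2 ≤ g (n+1) := (hgr n (n+1) (Nat.lt_succ_self n)).1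
      have h2 : ((1:ℝ)/2)^(n+1) = (1/2)^n / 2 := by rw [pow_succ]; ring
      rw [h2]
      have h0 : (0:ℝ) < t - g 0 := by have := hgt 0; linarith
      nlinarith [hgt n]
  have hlim : Filter.Tendsto g Filter.atTop (𝓝 t) := by
    have hlow : Filter.Tendsto (fun n => t - (t - g 0) * (1/2:ℝ)^n) Filter.atTop (𝓝 t) := by
      have : Filter.Tendsto (fun n => (t - g 0) * (1/2:ℝ)^n) Filter.atTop (𝓝 0) := by
        simpa using (tendsto_pow_atTop_nhds_zero_of_lt_one (by norm_num : (0:ℝ) ≤ 1/2)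
          (by norm_num : (1:ℝ)/2 < 1)).const_mul (t - g 0)
      simpa using Filter.Tendsto.const_sub t this
    apply tendsto_of_tendsto_of_tendsto_of_le_of_le hlow tendsto_const_nhds
    · exact fun n => by have := hgeom n; linarith
    · exact fun n => (hgt n).le
  refine core hcont hord ht (s := g) (fun n => ⟨hg0 n, le_trans (hgt n).le ht.2⟩)
    (fun n => ne_of_lt (hgt n)) hlim ?_
  intro A hTA hft m hm n hn
  by_contra hmn
  have key : ∀ a b : ℕ, a < b → f (g a) ∈ A → f (g b) ∈ A → False := by
    intro a b hab hfa hfb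
    have hchr : chron (f (g a)) (f t) :=
      hord (g a) ⟨hg0 a, le_trans (hgt a).le ht.2⟩ t ht (hgt a)
    have hAeq : A = line (f t) (f (g a) - f t) :=
      timeAxis_eq_line hTA hft hfa (Ne.symm (ne_of_chron hchr))
    exact (hgr a b hab).2 (hAeq ▸ hfb)
  rcases lt_trichotomy m n with h | h | h
  · exact key m n h hm hn
  · exact hmn h
  · exact key n m h hn hm

/-! ### Assembly -/

lemma exists_timelike : ∃ v : M, Q v > 0 := by
  refine ⟨EuclideanSpace.single 0 1, ?_⟩
  have h : ∀ i : Fin 4, (EuclideanSpace.single (0 : Fin 4) (1:ℝ)) i = if i = 0 then 1 else 0 :=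
    fun i => EuclideanSpace.single_apply 0 1 i
  simp only [Q, h]
  rw [if_neg (by decide : ¬ (1:Fin 4) = 0), if_neg (by decide : ¬ (2:Fin 4) = 0),
    if_neg (by decide : ¬ (3:Fin 4) = 0)]
  norm_num


/-- **Zeeman.** If `f : [0,1] → M` is continuous for the Fine topology `F`
and strictly order-preserving for the chronological order, then its image is a piecewise
linear path made of finitely many intervals along time axes. -/
theorem fineF_continuous_orderPreserving_piecewiseLinear (f : ℝ → M)
    (hcont : @ContinuousOn ℝ M _ FineF f (Set.Icc 0 1))
    (hord : ∀ s ∈ Set.Icc (0:ℝ) 1, ∀ t ∈ Set.Icc (0:ℝ) 1, s < t → chron (f s) (f t)) :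
    ∃ n : ℕ, ∃ τ : Fin (n + 1) → ℝ, τ 0 = 0 ∧ τ (Fin.last n) = 1 ∧ StrictMono τ ∧
      ∀ i : Fin n, ∃ a v : M, Q v > 0 ∧
        ∀ s ∈ Set.Icc (τ i.castSucc) (τ i.succ), ∃ c : ℝ, f s = a + c • v := by
  classical
  have htwo : ∀ t : ℝ, ∃ lo hi : ℝ, t ∈ Icc (0:ℝ) 1 →
      (0 ≤ lo ∧ lo ≤ t ∧ t ≤ hi ∧ hi ≤ 1 ∧ (0 < t → lo < t) ∧ (t < 1 → t < hi) ∧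
       (∃ v : M, Q v > 0 ∧ ∀ s ∈ Icc lo t, f s ∈ line (f t) v) ∧
       (∃ v : M, Q v > 0 ∧ ∀ s ∈ Icc t hi, f s ∈ line (f t) v)) := by
    intro t
    by_cases ht : t ∈ Icc (0:ℝ) 1
    · have htriv : ∃ v : M, Q v > 0 ∧ ∀ s ∈ Icc t t, f s ∈ line (f t) v := by
        obtain ⟨v, hv⟩ := exists_timelike
        refine ⟨v, hv, fun s hs => ?_⟩
        have : s = t := le_antisymm hs.2 hs.1
        subst this
        exact mem_line_self _ _
      have hleft : ∃ lo, 0 ≤ lo ∧ lo ≤ t ∧ (0 < t → lo < t) ∧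
          ∃ v : M, Q v > 0 ∧ ∀ s ∈ Icc lo t, f s ∈ line (f t) v := by
        rcases eq_or_lt_of_le ht.1 with h0 | h0
        · exact ⟨t, le_of_eq h0, le_refl t, fun h => absurd h (by rw [← h0]; exact lt_irrefl 0),
            htriv⟩
        · obtain ⟨u, hu0, hut, v, hv, hline⟩ := left_local hcont hord ht h0
          exact ⟨u, hu0, hut.le, fun _ => hut, v, hv, hline⟩
      have hright : ∃ hi, t ≤ hi ∧ hi ≤ 1 ∧ (t < 1 → t < hi) ∧
          ∃ v : M, Q v > 0 ∧ ∀ s ∈ Icc t hi, f s ∈ line (f t) v := by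
        rcases eq_or_lt_of_le ht.2 with h1 | h1
        · exact ⟨t, le_refl t, le_of_eq h1, fun h => absurd h (by rw [h1]; exact lt_irrefl 1),
            htriv⟩
        · obtain ⟨u, htu, hu1, v, hv, hline⟩ := right_local hcont hord ht h1
          exact ⟨u, htu.le, hu1, fun _ => htu, v, hv, hline⟩
      obtain ⟨lo, hlo0, hlot, hlostrict, hlline⟩ := hleft
      obtain ⟨hi, hthi, hhi1, hhistrict, hrline⟩ := hright
      exact ⟨lo, hi, fun _ => ⟨hlo0, hlot, hthi, hhi1, hlostrict, hhistrict, hlline, hrline⟩⟩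
    · exact ⟨0, 0, fun h => absurd h ht⟩
  choose lo hi hspec using htwo
  set lo' : ℝ → ℝ := fun t => if t = 0 then -1 else lo t with hlo'def
  set hi' : ℝ → ℝ := fun t => if t = 1 then 2 else hi t with hhi'def
  have hmem : ∀ t ∈ Icc (0:ℝ) 1, t ∈ Ioo (lo' t) (hi' t) := by
    intro t ht
    constructor
    · by_cases h : t = 0
      · subst h; simp [hlo'def]
      · have h0 : 0 < t := lt_of_le_of_ne ht.1 (Ne.symm h)
        simp only [hlo'def, if_neg h]
        exact (hspec t ht).2.2.2.2.1 h0
    · by_cases h : t = 1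
      · subst h; simp [hhi'def]
      · have h1 : t < 1 := lt_of_le_of_ne ht.2 h
        simp only [hhi'def, if_neg h]
        exact (hspec t ht).2.2.2.2.2.1 h1
  obtain ⟨b', hb'sub, hb'fin, hcover⟩ :=
    isCompact_Icc.elim_finite_subcover_image (b := Icc (0:ℝ) 1)
      (c := fun t => Ioo (lo' t) (hi' t)) (fun t _ => isOpen_Ioo)
      (fun x hx => Set.mem_biUnion hx (hmem x hx))
  set T : Finset ℝ := hb'fin.toFinset with hTdef
  have hTmem : ∀ t ∈ T, t ∈ Icc (0:ℝ) 1 := fun t ht => hb'sub (hb'fin.mem_toFinset.mp ht)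
  set P : Finset ℝ := insert 0 (insert 1 (T ∪ T.image lo ∪ T.image hi)) with hPdef
  have h0P : (0:ℝ) ∈ P := Finset.mem_insert_self _ _
  have h1P : (1:ℝ) ∈ P := Finset.mem_insert_of_mem (Finset.mem_insert_self _ _)
  have hPIcc : ∀ x ∈ P, x ∈ Icc (0:ℝ) 1 := by
    intro x hx
    rcases Finset.mem_insert.mp hx with rfl | hx
    · exact ⟨le_refl 0, zero_le_one⟩
    rcases Finset.mem_insert.mp hx with rfl | hx
    · exact ⟨zero_le_one, le_refl 1⟩
    rcases Finset.mem_union.mp hx with hx | hx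
    · rcases Finset.mem_union.mp hx with hx | hx
      · exact hTmem x hx
      · obtain ⟨t, ht, rfl⟩ := Finset.mem_image.mp hx
        have hs := hspec t (hTmem t ht)
        exact ⟨hs.1, le_trans hs.2.1 (hTmem t ht).2⟩
    · obtain ⟨t, ht, rfl⟩ := Finset.mem_image.mp hx
      have hs := hspec t (hTmem t ht)
      exact ⟨le_trans (hTmem t ht).1 hs.2.2.1, hs.2.2.2.1⟩
  have hPcard : 0 < P.card := Finset.card_pos.mpr ⟨0, h0P⟩
  set n : ℕ := P.card - 1 with hndef
  have hn : P.card = n + 1 := by omega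
  set τ : Fin (n+1) → ℝ := fun i => ((P.orderIsoOfFin hn) i : ℝ) with hτdef
  have hτmono : StrictMono τ := by
    intro i j hij
    have := (P.orderIsoOfFin hn).strictMono hij
    exact_mod_cast this
  have hτP : ∀ i, τ i ∈ P := fun i => ((P.orderIsoOfFin hn) i).2
  have hτsurj : ∀ x ∈ P, ∃ i, τ i = x := by
    intro x hx
    exact ⟨(P.orderIsoOfFin hn).symm ⟨x, hx⟩,
      congrArg Subtype.val ((P.orderIsoOfFin hn).apply_symm_apply ⟨x, hx⟩)⟩
  have hτ0 : τ 0 = 0 := by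
    obtain ⟨i, hi⟩ := hτsurj 0 h0P
    have h1 : τ 0 ≤ τ i := hτmono.monotone (Fin.zero_le i)
    have h2 : 0 ≤ τ 0 := (hPIcc _ (hτP 0)).1
    rw [hi] at h1
    linarith
  have hτlast : τ (Fin.last n) = 1 := by
    obtain ⟨i, hi⟩ := hτsurj 1 h1P
    have h1 : τ i ≤ τ (Fin.last n) := hτmono.monotone (Fin.le_last i)
    have h2 : τ (Fin.last n) ≤ 1 := (hPIcc _ (hτP (Fin.last n))).2
    rw [hi] at h1
    linarith
  have hgap : ∀ (i : Fin n) (x : ℝ), x ∈ P → τ i.castSucc < x → x < τ i.succ → False := by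
    intro i x hx h1 h2
    obtain ⟨j, rfl⟩ := hτsurj x hx
    have hj1 : i.castSucc < j := hτmono.lt_iff_lt.mp h1
    have hj2 : j < i.succ := hτmono.lt_iff_lt.mp h2
    rw [Fin.lt_def] at hj1 hj2
    simp only [Fin.coe_castSucc, Fin.val_succ] at hj1 hj2
    omega
  refine ⟨n, τ, hτ0, hτlast, hτmono, ?_⟩
  intro i
  set m : ℝ := (τ i.castSucc + τ i.succ)/2 with hmdef
  have hlt : τ i.castSucc < τ i.succ := hτmono (Fin.castSucc_lt_succ : i.castSucc < i.succ)
  have hm1 : τ i.castSucc < m := by rw [hmdef]; linarith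
  have hm2 : m < τ i.succ := by rw [hmdef]; linarith
  have hm01 : m ∈ Icc (0:ℝ) 1 := by
    have ha := hPIcc _ (hτP i.castSucc)
    have hb := hPIcc _ (hτP i.succ)
    constructor <;> [linarith [ha.1]; linarith [hb.2]]
  obtain ⟨t, htb', hmIoo⟩ := Set.mem_iUnion₂.mp (hcover hm01)
  have htT : t ∈ T := hb'fin.mem_toFinset.mpr htb'
  have htIcc : t ∈ Icc (0:ℝ) 1 := hTmem t htT
  have hs := hspec t htIcc
  have hloP : lo t ∈ P := Finset.mem_insert_of_mem (Finset.mem_insert_of_mem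
    (Finset.mem_union.mpr (Or.inl (Finset.mem_union.mpr (Or.inr
    (Finset.mem_image.mpr ⟨t, htT, rfl⟩))))))
  have hhiP : hi t ∈ P := Finset.mem_insert_of_mem (Finset.mem_insert_of_mem
    (Finset.mem_union.mpr (Or.inr (Finset.mem_image.mpr ⟨t, htT, rfl⟩))))
  have htP : t ∈ P := Finset.mem_insert_of_mem (Finset.mem_insert_of_mem
    (Finset.mem_union.mpr (Or.inl (Finset.mem_union.mpr (Or.inl htT)))))
  -- lo t < m < hi t
  have hlom : lo t < m := by
    by_cases h : t = 0
    · subst h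
      have h1 := hs.1
      have h2 := hs.2.1
      have hlo0 : lo 0 = 0 := le_antisymm h2 h1
      rw [hlo0]
      linarith [hm1, (hPIcc _ (hτP i.castSucc)).1]
    · have := hmIoo.1
      simp only [hlo'def, if_neg h] at this
      exact this
  have hhim : m < hi t := by
    by_cases h : t = 1
    · subst h
      have h1 := hs.2.2.1
      have h2 := hs.2.2.2.1
      have hhi1 : hi 1 = 1 := le_antisymm h2 h1
      rw [hhi1]
      linarith [hm2, (hPIcc _ (hτP i.succ)).2]
    · have := hmIoo.2
      simp only [hhi'def, if_neg h] at this
      exact this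
  have hlole : lo t ≤ τ i.castSucc := by
    by_contra hcon
    push_neg at hcon
    exact hgap i (lo t) hloP hcon (lt_trans hlom hm2)
  have hhige : τ i.succ ≤ hi t := by
    by_contra hcon
    push_neg at hcon
    exact hgap i (hi t) hhiP (lt_trans hm1 hhim) hcon
  have htcases : t ≤ τ i.castSucc ∨ τ i.succ ≤ t := by
    by_contra hcon
    push_neg at hcon
    exact hgap i t htP hcon.1 hcon.2
  rcases htcases with hcase | hcase
  · obtain ⟨v, hv, hline⟩ := hs.2.2.2.2.2.2.2
    refine ⟨f t, v, hv, fun s hsmem => ?_⟩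
    exact hline s ⟨le_trans hcase hsmem.1, le_trans hsmem.2 hhige⟩
  · obtain ⟨v, hv, hline⟩ := hs.2.2.2.2.2.2.1
    refine ⟨f t, v, hv, fun s hsmem => ?_⟩
    exact hline s ⟨le_trans hlole hsmem.1, le_trans hsmem.2 hcase⟩
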